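/- Let d ≥ 1 and N ≥ 1 be natural numbers and let 0 ≤ θ ≤ 1/2. For w ∈ Fin d, let P_w be the probability mass function on ({0,1}^d)^N under which the N vectors are i.i.d., with all coordinates independent, coordinate w distributed Bernoulli(1/2 + θ) and every other coordinate Bernoulli(1/2). Then for every function ψ : ({0,1}^d)^N → Fin d, (1/d) · Σ_{w ∈ Fin d} Σ_{x : ψ(x) ≠ w} P_w(x) ≥ 1 − (1 + 2θ)^N / d. -/

import Mathlib

set_option maxHeartbeats 1000000

lemma sum_prod_pi' {ι β : Type*} [Fintype ι] [DecidableEq ι] [Fintype β] [DecidableEq β]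
    (g : ι → β → ℝ) :
    ∑ x : ι → β, ∏ i, g i (x i) = ∏ i, ∑ b, g i b := by
  rw [Finset.prod_univ_sum, Fintype.piFinset_univ]

/-- Maximal-leakage lower bound for the "Hide-and-Seek" problem: the probability of error
of any estimator of the biased coordinate is at least `1 − (1+2θ)^N / d`. -/
theorem hide_and_seek_error_ge
    (d N : ℕ) (hd : 1 ≤ d) (hN : 1 ≤ N)
    (θ : ℝ) (hθ0 : 0 ≤ θ) (hθ : θ ≤ 1 / 2)
    (ψ : (Fin N → Fin d → Fin 2) → Fin d) :
    1 - (1 + 2 * θ) ^ N / d ≤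
      (1 / d : ℝ) * ∑ w : Fin d,
        ∑ x ∈ Finset.univ.filter (fun x : Fin N → Fin d → Fin 2 => ψ x ≠ w),
          ∏ j : Fin N, ∏ i : Fin d,
            (if i = w then (if x j i = 1 then 1 / 2 + θ else 1 / 2 - θ)
             else (1 / 2 : ℝ)) := by
  have hdpos : (0:ℝ) < d := by exact_mod_cast hd
  set f : Fin d → (Fin N → Fin d → Fin 2) → ℝ := fun w x =>
    ∏ j : Fin N, ∏ i : Fin d,
      (if i = w then (if x j i = 1 then 1 / 2 + θ else 1 / 2 - θ) else (1 / 2 : ℝ)) with hf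
  -- total mass is 1
  have htot : ∀ w, ∑ x : Fin N → Fin d → Fin 2, f w x = 1 := by
    intro w
    have h1 := sum_prod_pi' (fun (_ : Fin N) (y : Fin d → Fin 2) => ∏ i : Fin d,
      (if i = w then (if y i = 1 then 1 / 2 + θ else 1 / 2 - θ) else (1 / 2 : ℝ)))
    have h2 : ∀ j : Fin N, (∑ y : Fin d → Fin 2, ∏ i : Fin d,
            (if i = w then (if y i = 1 then 1 / 2 + θ else 1 / 2 - θ) else (1 / 2 : ℝ)))
        = ∏ i : Fin d, ∑ b : Fin 2,
            (if i = w then (if b = 1 then 1 / 2 + θ else 1 / 2 - θ) else (1 / 2 : ℝ)) := by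
      intro j
      have := sum_prod_pi' (fun (i : Fin d) (b : Fin 2) =>
        (if i = w then (if b = 1 then 1 / 2 + θ else 1 / 2 - θ) else (1 / 2 : ℝ)))
      simpa using this
    have h3 : ∀ i : Fin d, (∑ b : Fin 2,
        (if i = w then (if b = 1 then 1 / 2 + θ else 1 / 2 - θ) else (1 / 2 : ℝ))) = 1 := by
      intro i
      by_cases h : i = w <;> simp [h, Fin.sum_univ_two] <;> ring
    show (∑ x : Fin N → Fin d → Fin 2, ∏ j : Fin N, ∏ i : Fin d,
      (if i = w then (if x j i = 1 then 1 / 2 + θ else 1 / 2 - θ) else (1 / 2 : ℝ))) = 1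
    rw [h1, Finset.prod_congr rfl fun j _ => h2 j,
      Finset.prod_congr rfl fun i _ => h3 i]
    simp
  -- pointwise bound
  have hc' : (0:ℝ) ≤ (1/2 + θ) * (1/2)^(d-1) := by positivity
  have hb : ∀ w x, f w x ≤ ((1/2 + θ) * (1/2)^(d-1)) ^ N := by
    intro w x
    have hle : ∀ j : Fin N, (∏ i : Fin d,
        (if i = w then (if x j i = 1 then 1 / 2 + θ else 1 / 2 - θ) else (1 / 2 : ℝ)))
        ≤ (1/2 + θ) * (1/2)^(d-1) := by
      intro j
      rw [← Finset.mul_prod_erase Finset.univ _ (Finset.mem_univ w)]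
      have herase : (∏ i ∈ Finset.univ.erase w,
          (if i = w then (if x j i = 1 then 1 / 2 + θ else 1 / 2 - θ) else (1 / 2 : ℝ)))
          = (1/2 : ℝ)^(d-1) := by
        rw [Finset.prod_congr rfl (fun i hi => if_neg (Finset.mem_erase.1 hi).1),
          Finset.prod_const, Finset.card_erase_of_mem (Finset.mem_univ w)]
        simp
      rw [herase, if_pos rfl]
      have h1 : (if x j w = 1 then 1 / 2 + θ else 1 / 2 - θ) ≤ 1/2 + θ := by
        split_ifs <;> linarith
      have hp : (0:ℝ) ≤ (1/2 : ℝ)^(d-1) := by positivity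
      nlinarith
    have hnn : ∀ j : Fin N, (0:ℝ) ≤ ∏ i : Fin d,
        (if i = w then (if x j i = 1 then 1 / 2 + θ else 1 / 2 - θ) else (1 / 2 : ℝ)) := by
      intro j
      apply Finset.prod_nonneg
      intro i _
      split_ifs <;> linarith
    have h := Finset.prod_le_prod (s := Finset.univ) (fun j _ => hnn j) (fun j _ => hle j)
    rw [Finset.prod_const, Finset.card_univ, Fintype.card_fin] at h
    exact h
  -- sum over correct answers
  set C : ℝ := ∑ w : Fin d,
      ∑ x ∈ Finset.univ.filter (fun x : Fin N → Fin d → Fin 2 => ψ x = w), f w x with hC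
  have hfib : ∑ w : Fin d,
      (Finset.univ.filter (fun x : Fin N → Fin d → Fin 2 => ψ x = w)).card
      = Fintype.card (Fin N → Fin d → Fin 2) := by
    rw [← Finset.card_univ (α := Fin N → Fin d → Fin 2)]
    exact (Finset.card_eq_sum_card_fiberwise (fun x _ => Finset.mem_univ (ψ x))).symm
  have hcard : (Fintype.card (Fin N → Fin d → Fin 2) : ℝ) = ((2:ℝ)^d)^N := by
    have : Fintype.card (Fin N → Fin d → Fin 2) = (2^d)^N := by
      simp [Fintype.card_fun]
    rw [this]
    push_cast
    ring
  have hCle : C ≤ (1 + 2*θ)^N := by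
    have h1 : C ≤ ∑ w : Fin d,
        ∑ _x ∈ Finset.univ.filter (fun x : Fin N → Fin d → Fin 2 => ψ x = w),
          ((1/2 + θ) * (1/2)^(d-1)) ^ N := by
      apply Finset.sum_le_sum
      intro w _
      exact Finset.sum_le_sum fun x _ => hb w x
    have h2 : (∑ w : Fin d,
        ∑ _x ∈ Finset.univ.filter (fun x : Fin N → Fin d → Fin 2 => ψ x = w),
          ((1/2 + θ) * (1/2)^(d-1)) ^ N)
        = (Fintype.card (Fin N → Fin d → Fin 2) : ℝ) * ((1/2 + θ) * (1/2)^(d-1)) ^ N := by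
      simp only [Finset.sum_const, nsmul_eq_mul, ← Finset.sum_mul]
      rw [← Nat.cast_sum, hfib]
    have h3 : ((2:ℝ)^d)^N * ((1/2 + θ) * (1/2)^(d-1)) ^ N = (1 + 2*θ)^N := by
      rw [← mul_pow]
      congr 1
      have h2d : (2:ℝ)^d = 2^(d-1) * 2 := by
        rw [← pow_succ]
        congr 1
        omega
      have hh : ((1:ℝ)/2)^(d-1) * 2^(d-1) = 1 := by
        rw [← mul_pow]; norm_num
      rw [h2d]
      nlinarith [hh]
    calc C ≤ _ := h1
      _ = _ := h2
      _ = ((2:ℝ)^d)^N * ((1/2 + θ) * (1/2)^(d-1)) ^ N := by rw [hcard]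
      _ = (1 + 2*θ)^N := h3
  -- error sum = d - C
  have hE : (∑ w : Fin d,
      ∑ x ∈ Finset.univ.filter (fun x : Fin N → Fin d → Fin 2 => ψ x ≠ w), f w x)
      = d - C := by
    have hw : ∀ w : Fin d,
        (∑ x ∈ Finset.univ.filter (fun x : Fin N → Fin d → Fin 2 => ψ x ≠ w), f w x)
        = 1 - ∑ x ∈ Finset.univ.filter (fun x : Fin N → Fin d → Fin 2 => ψ x = w), f w x := by
      intro w
      have h := Finset.sum_filter_add_sum_filter_not Finset.univ
        (fun x : Fin N → Fin d → Fin 2 => ψ x = w) (f w)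
      rw [htot w] at h
      linarith [h]
    calc (∑ w : Fin d,
        ∑ x ∈ Finset.univ.filter (fun x : Fin N → Fin d → Fin 2 => ψ x ≠ w), f w x)
        = ∑ w : Fin d, (1 - ∑ x ∈ Finset.univ.filter
            (fun x : Fin N → Fin d → Fin 2 => ψ x = w), f w x) :=
          Finset.sum_congr rfl fun w _ => hw w
      _ = (∑ _w : Fin d, (1:ℝ)) - C := by rw [Finset.sum_sub_distrib, hC]
      _ = d - C := by rw [Finset.sum_const]; simp
  show 1 - (1 + 2 * θ) ^ N / d ≤ (1 / d : ℝ) * ∑ w : Fin d,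
      ∑ x ∈ Finset.univ.filter (fun x : Fin N → Fin d → Fin 2 => ψ x ≠ w), f w x
  rw [hE, mul_sub, one_div, inv_mul_cancel₀ (ne_of_gt hdpos)]
  have hdiv : C / d ≤ (1 + 2*θ)^N / d := by gcongr
  have h' : (d:ℝ)⁻¹ * C = C / d := by ring
  rw [h']
  linarith
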